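/- For integers n, m ≥ 2, the F-index of the edge S-join of the path P_n and the path P_m is F(P_n ∨̱_S P_m) = (n − 1){(m + 2)³ + 6(m − 1)(n − 1) + m(n − 1)²} + 12mn − 4m − 10n − 10. -/

import Mathlib

/-- The subdivision graph `S(G)`: a new vertex is inserted into each edge of `G`
(each edge is replaced by a path of length 2). The inserted vertices form the
right summand `↥G.edgeSet`. -/
def Sgraph {V : Type*} (G : SimpleGraph V) : SimpleGraph (V ⊕ ↥G.edgeSet) where
  Adj x y :=
    match x, y with
    | Sum.inl v, Sum.inr e => v ∈ (e : Sym2 V)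
    | Sum.inr e, Sum.inl v => v ∈ (e : Sym2 V)
    | _, _ => False
  symm := by constructor; rintro (v | e) (w | f) h <;> exact h
  loopless := by constructor; rintro (v | e) h <;> exact h

/-- The graph `R(G)`: obtained from `G` by inserting a new vertex into each edge of `G`
and joining each new vertex to the end vertices of its corresponding edge. -/
def Rgraph {V : Type*} (G : SimpleGraph V) : SimpleGraph (V ⊕ ↥G.edgeSet) where
  Adj x y :=
    match x, y with
    | Sum.inl v, Sum.inl w => G.Adj v w
    | Sum.inl v, Sum.inr e => v ∈ (e : Sym2 V)
    | Sum.inr e, Sum.inl v => v ∈ (e : Sym2 V)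
    | Sum.inr _, Sum.inr _ => False
  symm := by
    constructor
    rintro (v | e) (w | f) h
    · exact G.adj_symm h
    · exact h
    · exact h
    · exact h
  loopless := by
    constructor
    rintro (v | e) h
    · exact G.irrefl h
    · exact h

/-- The graph `Q(G)`: obtained from `G` by inserting a new vertex into each edge of `G`,
then joining by edges those pairs of new vertices lying on adjacent edges of `G`. -/
def Qgraph {V : Type*} (G : SimpleGraph V) : SimpleGraph (V ⊕ ↥G.edgeSet) where
  Adj x y :=
    match x, y with
    | Sum.inl _, Sum.inl _ => False
    | Sum.inl v, Sum.inr e => v ∈ (e : Sym2 V)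
    | Sum.inr e, Sum.inl v => v ∈ (e : Sym2 V)
    | Sum.inr e, Sum.inr f => e ≠ f ∧ ∃ v, v ∈ (e : Sym2 V) ∧ v ∈ (f : Sym2 V)
  symm := by
    constructor
    rintro (v | e) (w | f) h
    · exact h
    · exact h
    · exact h
    · exact ⟨h.1.symm, by obtain ⟨v, h1, h2⟩ := h.2; exact ⟨v, h2, h1⟩⟩
  loopless := by
    constructor
    rintro (v | e) h
    · exact h
    · exact h.1 rfl

/-- The total graph `T(G)`: obtained from `G` by inserting a new vertex into each edge,
joining each new vertex to the end vertices of its corresponding edge, and joining by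
edges those pairs of new vertices lying on adjacent edges of `G`. -/
def Tgraph {V : Type*} (G : SimpleGraph V) : SimpleGraph (V ⊕ ↥G.edgeSet) where
  Adj x y :=
    match x, y with
    | Sum.inl v, Sum.inl w => G.Adj v w
    | Sum.inl v, Sum.inr e => v ∈ (e : Sym2 V)
    | Sum.inr e, Sum.inl v => v ∈ (e : Sym2 V)
    | Sum.inr e, Sum.inr f => e ≠ f ∧ ∃ v, v ∈ (e : Sym2 V) ∧ v ∈ (f : Sym2 V)
  symm := by
    constructor
    rintro (v | e) (w | f) h
    · exact G.adj_symm h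
    · exact h
    · exact h
    · exact ⟨h.1.symm, by obtain ⟨v, h1, h2⟩ := h.2; exact ⟨v, h2, h1⟩⟩
  loopless := by
    constructor
    rintro (v | e) h
    · exact G.irrefl h
    · exact h.1 rfl

/-- The disjoint union of `H` and `K` together with all edges joining a vertex `a` of `H`
with `P a` to every vertex of `K`. -/
def joinOn {A B : Type*} (H : SimpleGraph A) (K : SimpleGraph B) (P : A → Prop) :
    SimpleGraph (A ⊕ B) where
  Adj x y :=
    match x, y with
    | Sum.inl a, Sum.inl a' => H.Adj a a'
    | Sum.inr b, Sum.inr b' => K.Adj b b'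
    | Sum.inl a, Sum.inr _ => P a
    | Sum.inr _, Sum.inl a => P a
  symm := by
    constructor
    rintro (a | b) (a' | b') h
    · exact H.adj_symm h
    · exact h
    · exact h
    · exact K.adj_symm h
  loopless := by
    constructor
    rintro (a | b) h
    · exact H.irrefl h
    · exact K.irrefl h

/-- The vertex S-join `G₁ ∨̇_S G₂`: obtained from `S(G₁)` and `G₂` by joining each vertex
of `V(G₁)` to every vertex of `G₂`. -/
def vertexSJoin {V₁ V₂ : Type*} (G₁ : SimpleGraph V₁) (G₂ : SimpleGraph V₂) :
    SimpleGraph ((V₁ ⊕ ↥G₁.edgeSet) ⊕ V₂) :=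
  joinOn (Sgraph G₁) G₂ (fun x => x.isLeft)

/-- The edge S-join `G₁ ∨̱_S G₂`: obtained from `S(G₁)` and `G₂` by joining each inserted
vertex (each vertex of `I(G₁)`) to every vertex of `G₂`. -/
def edgeSJoin {V₁ V₂ : Type*} (G₁ : SimpleGraph V₁) (G₂ : SimpleGraph V₂) :
    SimpleGraph ((V₁ ⊕ ↥G₁.edgeSet) ⊕ V₂) :=
  joinOn (Sgraph G₁) G₂ (fun x => x.isRight)

/-- The vertex R-join `G₁ ∨̇_R G₂`. -/
def vertexRJoin {V₁ V₂ : Type*} (G₁ : SimpleGraph V₁) (G₂ : SimpleGraph V₂) :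
    SimpleGraph ((V₁ ⊕ ↥G₁.edgeSet) ⊕ V₂) :=
  joinOn (Rgraph G₁) G₂ (fun x => x.isLeft)

/-- The edge R-join `G₁ ∨̱_R G₂`. -/
def edgeRJoin {V₁ V₂ : Type*} (G₁ : SimpleGraph V₁) (G₂ : SimpleGraph V₂) :
    SimpleGraph ((V₁ ⊕ ↥G₁.edgeSet) ⊕ V₂) :=
  joinOn (Rgraph G₁) G₂ (fun x => x.isRight)

/-- The vertex Q-join `G₁ ∨̇_Q G₂`. -/
def vertexQJoin {V₁ V₂ : Type*} (G₁ : SimpleGraph V₁) (G₂ : SimpleGraph V₂) :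
    SimpleGraph ((V₁ ⊕ ↥G₁.edgeSet) ⊕ V₂) :=
  joinOn (Qgraph G₁) G₂ (fun x => x.isLeft)

/-- The edge Q-join `G₁ ∨̱_Q G₂`. -/
def edgeQJoin {V₁ V₂ : Type*} (G₁ : SimpleGraph V₁) (G₂ : SimpleGraph V₂) :
    SimpleGraph ((V₁ ⊕ ↥G₁.edgeSet) ⊕ V₂) :=
  joinOn (Qgraph G₁) G₂ (fun x => x.isRight)

/-- The vertex T-join `G₁ ∨̇_T G₂`. -/
def vertexTJoin {V₁ V₂ : Type*} (G₁ : SimpleGraph V₁) (G₂ : SimpleGraph V₂) :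
    SimpleGraph ((V₁ ⊕ ↥G₁.edgeSet) ⊕ V₂) :=
  joinOn (Tgraph G₁) G₂ (fun x => x.isLeft)

/-- The edge T-join `G₁ ∨̱_T G₂`. -/
def edgeTJoin {V₁ V₂ : Type*} (G₁ : SimpleGraph V₁) (G₂ : SimpleGraph V₂) :
    SimpleGraph ((V₁ ⊕ ↥G₁.edgeSet) ⊕ V₂) :=
  joinOn (Tgraph G₁) G₂ (fun x => x.isRight)

/-- Degree of a vertex in a graph on a finite vertex type. -/
noncomputable def gdeg {V : Type*} [Finite V] (G : SimpleGraph V) (v : V) : ℕ :=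
  haveI : Fintype ↥(G.neighborSet v) := Fintype.ofFinite _
  G.degree v

/-- The forgotten topological index (F-index): `F(G) = ∑_{v ∈ V(G)} d_G(v)³`. -/
noncomputable def Findex {V : Type*} [Finite V] (G : SimpleGraph V) : ℕ :=
  haveI := Fintype.ofFinite V
  ∑ v : V, gdeg G v ^ 3

/-- The first Zagreb index: `M₁(G) = ∑_{v ∈ V(G)} d_G(v)²`. -/
noncomputable def M1 {V : Type*} [Finite V] (G : SimpleGraph V) : ℕ :=
  haveI := Fintype.ofFinite V
  ∑ v : V, gdeg G v ^ 2

/-- `M₄(G) = ∑_{v ∈ V(G)} d_G(v)⁴`. -/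
noncomputable def M4 {V : Type*} [Finite V] (G : SimpleGraph V) : ℕ :=
  haveI := Fintype.ofFinite V
  ∑ v : V, gdeg G v ^ 4

/-- The hyper Zagreb index: `HM(G) = ∑_{uv ∈ E(G)} (d_G(u) + d_G(v))²`. -/
noncomputable def HM {V : Type*} [Finite V] (G : SimpleGraph V) : ℕ :=
  haveI : Fintype ↥G.edgeSet := Fintype.ofFinite _
  ∑ e : ↥G.edgeSet,
    Sym2.lift ⟨fun u v => (gdeg G u + gdeg G v) ^ 2,
      fun u v => by dsimp only; rw [add_comm]⟩ (e : Sym2 V)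

/-- The redefined Zagreb index:
`ReZM(G) = ∑_{uv ∈ E(G)} d_G(u) d_G(v) (d_G(u) + d_G(v))`. -/
noncomputable def ReZM {V : Type*} [Finite V] (G : SimpleGraph V) : ℕ :=
  haveI : Fintype ↥G.edgeSet := Fintype.ofFinite _
  ∑ e : ↥G.edgeSet,
    Sym2.lift ⟨fun u v => gdeg G u * gdeg G v * (gdeg G u + gdeg G v),
      fun u v => by dsimp only; ring⟩ (e : Sym2 V)

/-- The number of edges of `G`. -/
noncomputable def numEdges {V : Type*} (G : SimpleGraph V) : ℕ :=
  Nat.card ↥G.edgeSet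

section Aux

open SimpleGraph

lemma gdeg_eq {V : Type*} [Finite V] (G : SimpleGraph V) (v : V) :
    gdeg G v = Nat.card ↥(G.neighborSet v) := by
  haveI : Fintype ↥(G.neighborSet v) := Fintype.ofFinite _
  unfold gdeg
  rw [Nat.card_eq_fintype_card]
  convert (SimpleGraph.card_neighborSet_eq_degree G v).symm

lemma Findex_eq {V : Type*} [Fintype V] (G : SimpleGraph V) :
    Findex G = ∑ v : V, gdeg G v ^ 3 := by
  unfold Findex; congr!

lemma numEdges_eq {V : Type*} (G : SimpleGraph V) [Fintype ↥G.edgeSet] :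
    numEdges G = Fintype.card ↥G.edgeSet := by
  unfold numEdges; exact Nat.card_eq_fintype_card

lemma natCard_set_sum {α β : Type*} (s : Set (α ⊕ β)) [Finite α] [Finite β] :
    Nat.card ↥s = Nat.card ↥(Sum.inl ⁻¹' s) + Nat.card ↥(Sum.inr ⁻¹' s) := by
  rw [← Nat.card_sum]
  apply Nat.card_congr
  exact {
    toFun := fun x => match x with
      | ⟨Sum.inl a, ha⟩ => Sum.inl ⟨a, ha⟩
      | ⟨Sum.inr b, hb⟩ => Sum.inr ⟨b, hb⟩
    invFun := fun x => match x with
      | Sum.inl ⟨a, ha⟩ => ⟨Sum.inl a, ha⟩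
      | Sum.inr ⟨b, hb⟩ => ⟨Sum.inr b, hb⟩
    left_inv := by rintro ⟨(a|b), h⟩ <;> rfl
    right_inv := by rintro (⟨a,ha⟩|⟨b,hb⟩) <;> rfl }

variable {V₁ V₂ : Type*} [Finite V₁] [Finite V₂] (G₁ : SimpleGraph V₁) (G₂ : SimpleGraph V₂)

lemma deg_inl_inl (v : V₁) :
    gdeg (edgeSJoin G₁ G₂) (Sum.inl (Sum.inl v)) = gdeg G₁ v := by
  rw [gdeg_eq, gdeg_eq, natCard_set_sum, natCard_set_sum]
  have h2 : (Sum.inr ⁻¹' ((edgeSJoin G₁ G₂).neighborSet (Sum.inl (Sum.inl v))) : Set V₂) = ∅ := by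
    ext b; simp [SimpleGraph.neighborSet, edgeSJoin, joinOn]
  have h0 : (Sum.inl ⁻¹' (Sum.inl ⁻¹' ((edgeSJoin G₁ G₂).neighborSet (Sum.inl (Sum.inl v)))) : Set V₁) = ∅ := by
    ext w; simp [SimpleGraph.neighborSet, edgeSJoin, joinOn, Sgraph]
  rw [h0, h2, Nat.card_coe_set_eq ∅, Set.ncard_empty, Nat.card_coe_set_eq ∅, Set.ncard_empty,
    add_zero, zero_add]
  haveI : DecidableEq V₁ := Classical.decEq _
  apply Nat.card_congr
  exact ((Equiv.subtypeSubtypeEquivSubtypeInter (· ∈ G₁.edgeSet) (v ∈ ·)).trans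
    (G₁.incidenceSetEquivNeighborSet v))

lemma deg_inl_inr (e : ↥G₁.edgeSet) :
    gdeg (edgeSJoin G₁ G₂) (Sum.inl (Sum.inr e)) = 2 + Nat.card V₂ := by
  rw [gdeg_eq, natCard_set_sum, natCard_set_sum]
  have h2 : (Sum.inr ⁻¹' ((edgeSJoin G₁ G₂).neighborSet (Sum.inl (Sum.inr e))) : Set V₂) = Set.univ := by
    ext b; simp [SimpleGraph.neighborSet, edgeSJoin, joinOn]
  have h1 : (Sum.inr ⁻¹' (Sum.inl ⁻¹' ((edgeSJoin G₁ G₂).neighborSet (Sum.inl (Sum.inr e)))) : Set ↥G₁.edgeSet) = ∅ := by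
    ext f; simp [SimpleGraph.neighborSet, edgeSJoin, joinOn, Sgraph]
  have h0 : (Sum.inl ⁻¹' (Sum.inl ⁻¹' ((edgeSJoin G₁ G₂).neighborSet (Sum.inl (Sum.inr e)))) : Set V₁) = {w | w ∈ (e : Sym2 V₁)} := by
    ext w; simp [SimpleGraph.neighborSet, edgeSJoin, joinOn, Sgraph]
  rw [h0, h1, h2, Nat.card_coe_set_eq ∅, Set.ncard_empty, add_zero,
    Nat.card_coe_set_eq Set.univ, Set.ncard_univ]
  congr 1
  obtain ⟨e, he⟩ := e
  induction e with
  | _ a b =>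
    have hab : a ≠ b := (G₁.mem_edgeSet.mp he).ne
    have : {w | w ∈ (s(a, b) : Sym2 V₁)} = {a, b} := by
      ext w; simp [Sym2.mem_iff]
    rw [Nat.card_coe_set_eq, this, Set.ncard_pair hab]

lemma deg_inr (w : V₂) :
    gdeg (edgeSJoin G₁ G₂) (Sum.inr w) = numEdges G₁ + gdeg G₂ w := by
  rw [gdeg_eq, gdeg_eq, natCard_set_sum, natCard_set_sum]
  have h2 : (Sum.inr ⁻¹' ((edgeSJoin G₁ G₂).neighborSet (Sum.inr w)) : Set V₂) = G₂.neighborSet w := by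
    ext b; simp [SimpleGraph.neighborSet, edgeSJoin, joinOn]
  have h1 : (Sum.inr ⁻¹' (Sum.inl ⁻¹' ((edgeSJoin G₁ G₂).neighborSet (Sum.inr w))) : Set ↥G₁.edgeSet) = Set.univ := by
    ext f; simp [SimpleGraph.neighborSet, edgeSJoin, joinOn]
  have h0 : (Sum.inl ⁻¹' (Sum.inl ⁻¹' ((edgeSJoin G₁ G₂).neighborSet (Sum.inr w))) : Set V₁) = ∅ := by
    ext v; simp [SimpleGraph.neighborSet, edgeSJoin, joinOn]
  rw [h0, h1, h2, Nat.card_coe_set_eq ∅, Set.ncard_empty, zero_add,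
    Nat.card_coe_set_eq Set.univ, Set.ncard_univ]
  rfl

end Aux
section PathAux
open SimpleGraph Finset

lemma gdeg_path {n : ℕ} (hn : 2 ≤ n) (v : Fin n) :
    gdeg (SimpleGraph.pathGraph n) v = if v.val = 0 ∨ v.val = n - 1 then 1 else 2 := by
  rw [gdeg_eq, Nat.card_coe_set_eq]
  split_ifs with h
  · rcases h with h | h
    · have hs : (SimpleGraph.pathGraph n).neighborSet v = {⟨1, by omega⟩} := by
        ext u
        simp only [SimpleGraph.mem_neighborSet, SimpleGraph.pathGraph_adj, Set.mem_singleton_iff,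
          Fin.ext_iff]
        omega
      rw [hs, Set.ncard_singleton]
    · have hs : (SimpleGraph.pathGraph n).neighborSet v = {⟨n - 2, by omega⟩} := by
        ext u
        have := u.isLt
        simp only [SimpleGraph.mem_neighborSet, SimpleGraph.pathGraph_adj, Set.mem_singleton_iff,
          Fin.ext_iff]
        omega
      rw [hs, Set.ncard_singleton]
  · push_neg at h
    have hvlt := v.isLt
    have hs : (SimpleGraph.pathGraph n).neighborSet v =
        {⟨v.val - 1, by omega⟩, ⟨v.val + 1, by omega⟩} := by
      ext u
      have := u.isLt
      simp only [SimpleGraph.mem_neighborSet, SimpleGraph.pathGraph_adj, Set.mem_insert_iff,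
        Set.mem_singleton_iff, Fin.ext_iff]
      omega
    rw [hs, Set.ncard_pair (by simp only [ne_eq, Fin.ext_iff]; omega)]

lemma sum_endpoints {M : Type*} [AddCommMonoid M] {n : ℕ} (hn : 2 ≤ n) (c1 c2 : M) :
    (∑ v : Fin n, if v.val = 0 ∨ v.val = n - 1 then c1 else c2) = c1 + c1 + (n - 2) • c2 := by
  rw [Fin.sum_univ_eq_sum_range (fun i => if i = 0 ∨ i = n - 1 then c1 else c2)]
  have hr : Finset.range n = insert 0 (insert (n - 1) (Finset.Ioo 0 (n - 1))) := by
    ext i; simp only [Finset.mem_range, Finset.mem_insert, Finset.mem_Ioo]; omega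
  rw [hr, Finset.sum_insert (by simp only [Finset.mem_insert, Finset.mem_Ioo]; omega),
    Finset.sum_insert (by simp only [Finset.mem_Ioo]; omega)]
  rw [Finset.sum_congr rfl (fun i hi => by
    simp only [Finset.mem_Ioo] at hi
    rw [if_neg (by omega)]), Finset.sum_const, Nat.card_Ioo]
  simp only [true_or, or_true, if_true, eq_self_iff_true]
  rw [show n - 1 - 0 - 1 = n - 2 from by omega, add_assoc]

lemma numEdges_path {n : ℕ} (hn : 2 ≤ n) :
    numEdges (SimpleGraph.pathGraph n) = n - 1 := by
  classical
  have hsum : ∑ v : Fin n, (SimpleGraph.pathGraph n).degree v = 2 * (n - 1) := by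
    have : ∀ v : Fin n, (SimpleGraph.pathGraph n).degree v = gdeg (SimpleGraph.pathGraph n) v := by
      intro v
      rw [gdeg_eq, ← SimpleGraph.card_neighborSet_eq_degree, Nat.card_eq_fintype_card]
    rw [Finset.sum_congr rfl (fun v _ => this v)]
    rw [Finset.sum_congr rfl (fun v _ => gdeg_path hn v), sum_endpoints hn 1 2]
    simp only [smul_eq_mul]
    omega
  rw [SimpleGraph.sum_degrees_eq_twice_card_edges] at hsum
  rw [numEdges_eq, ← Set.toFinset_card]
  rw [show (SimpleGraph.pathGraph n).edgeSet.toFinset = (SimpleGraph.pathGraph n).edgeFinset from rfl]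
  omega

end PathAux
theorem Findex_edgeSJoin_ex11 (n m : ℕ) (hn : 2 ≤ n) (hm : 2 ≤ m) :
    (Findex (edgeSJoin (SimpleGraph.pathGraph n) (SimpleGraph.pathGraph m)) : ℤ) =
      ((n : ℤ) - 1) * (((m : ℤ) + 2) ^ 3 + 6 * ((m : ℤ) - 1) * ((n : ℤ) - 1) + (m : ℤ) * ((n : ℤ) - 1) ^ 2) + 12 * (m : ℤ) * (n : ℤ) - 4 * (m : ℤ) - 10 * (n : ℤ) - 10 := by
  obtain ⟨a, rfl⟩ : ∃ a, n = a + 2 := ⟨n - 2, by omega⟩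
  obtain ⟨b, rfl⟩ : ∃ b, m = b + 2 := ⟨m - 2, by omega⟩
  haveI : Fintype ↥(SimpleGraph.pathGraph (a + 2)).edgeSet := Fintype.ofFinite _
  have hne : numEdges (SimpleGraph.pathGraph (a + 2)) = a + 1 := by
    rw [numEdges_path (by omega)]
    omega
  have hce : Fintype.card ↥(SimpleGraph.pathGraph (a + 2)).edgeSet = a + 1 := by
    rw [← numEdges_eq]; exact hne
  have key : Findex (edgeSJoin (SimpleGraph.pathGraph (a + 2)) (SimpleGraph.pathGraph (b + 2)))
      = (1 + 1 + a * 8) + (a + 1) * (2 + (b + 2)) ^ 3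
        + ((a + 2) ^ 3 + (a + 2) ^ 3 + b * (a + 3) ^ 3) := by
    rw [Findex_eq, Fintype.sum_sum_type, Fintype.sum_sum_type]
    congr 1
    · congr 1
      · -- original vertices of P_n
        rw [Finset.sum_congr rfl (fun v _ => by
          rw [deg_inl_inl, gdeg_path (by omega), apply_ite (· ^ 3)])]
        rw [sum_endpoints (by omega : 2 ≤ a + 2) (1 ^ 3) (2 ^ 3)]
        rw [show a + 2 - 2 = a from by omega]
        simp only [smul_eq_mul]
        norm_num
      · -- inserted vertices
        rw [Finset.sum_congr rfl (fun e _ => by rw [deg_inl_inr])]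
        rw [Finset.sum_const, Finset.card_univ, hce]
        simp only [smul_eq_mul, Nat.card_eq_fintype_card, Fintype.card_fin]
    · -- vertices of P_m
      rw [Finset.sum_congr rfl (fun w _ => by
        rw [deg_inr, hne, gdeg_path (by omega),
          apply_ite (fun t => (a + 1 + t) ^ 3)])]
      rw [sum_endpoints (by omega : 2 ≤ b + 2) ((a + 1 + 1) ^ 3) ((a + 1 + 2) ^ 3)]
      rw [show b + 2 - 2 = b from by omega]
      simp only [smul_eq_mul]
      try ring
  rw [key]
  push_cast
  ring
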